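/- In the two-client Partition-reduction instance, both clients have total completion time at most 3B if and only if the set of days on which client 1 is scheduled first has total s-weight exactly B. -/
import Mathlib


theorem stmt8 (N B : ℕ) (s : Fin N → ℕ) (hsum : ∑ i, s i = 2 * B)
    (first : Fin N → Bool) :
    ((∑ i, if first i then s i else 2 * s i) ≤ 3 * B ∧
     (∑ i, if first i then 2 * s i else s i) ≤ 3 * B) ↔
    ∑ i ∈ Finset.univ.filter (fun i => first i = true), s i = B := by
  set A := ∑ i ∈ Finset.univ.filter (fun i => first i = true), s i with hA
  set C := ∑ i ∈ Finset.univ.filter (fun i => ¬ first i = true), s i with hC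
  have hAC : A + C = 2 * B := by
    rw [hA, hC, Finset.sum_filter_add_sum_filter_not, hsum]
  have h1 : (∑ i, if first i then s i else 2 * s i) = A + 2 * C := by
    rw [Finset.sum_ite, hA, hC, Finset.mul_sum]
  have h2 : (∑ i, if first i then 2 * s i else s i) = 2 * A + C := by
    rw [Finset.sum_ite, hA, hC, Finset.mul_sum]
  rw [h1, h2]
  omega
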